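/- Let A ≥ 1 and K be natural numbers. For every adaptive K-query strategy (q, G) on A arms, the set of arms i* ∈ Fin A on which the strategy succeeds (i.e., its output when run on the reward function f_{i*} equals i*) has cardinality at most K + 1. -/

import Mathlib

/-- The transcript of an adaptive query strategy `q` run against reward
function `f` for a given number of steps:
`t₀ = []`, `t_{j+1} = t_j ++ [f (q t_j)]`. -/
def transcript (A : ℕ) (q : List Bool → Fin A) (f : Fin A → Bool) : ℕ → List Bool
  | 0 => []
  | j + 1 => transcript A q f j ++ [f (q (transcript A q f j))]

/-- The adaptive `K`-query strategy `(q, G)` banditSucceeds on the arm `i` if its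
output when run on the reward function `f_i = fun j => decide (j = i)`
equals `i`. -/
def banditSucceeds (A K : ℕ) (q G : List Bool → Fin A) (i : Fin A) : Prop :=
  G (transcript A q (fun j => decide (j = i)) K) = i

lemma transcript_eq_zero (A K : ℕ) (q : List Bool → Fin A) (i : Fin A)
    (h : ∀ j < K, q (transcript A q (fun _ => false) j) ≠ i) (m : ℕ) (hm : m ≤ K) :
    transcript A q (fun j => decide (j = i)) m = transcript A q (fun _ => false) m := by
  induction m with
  | zero => rfl
  | succ n ih =>
    have hn : n ≤ K := Nat.le_of_succ_le hm
    have ihn := ih hn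
    simp only [transcript, ihn]
    congr 1
    simp [h n (Nat.lt_of_succ_le hm)]

theorem stmt_0 (A K : ℕ) (hA : 1 ≤ A) (q G : List Bool → Fin A) :
    {i : Fin A | banditSucceeds A K q G i}.ncard ≤ K + 1 := by
  classical
  set z := transcript A q (fun _ => false) with hz
  have hsub : {i : Fin A | banditSucceeds A K q G i} ⊆
      ↑((Finset.image (fun j => q (z j)) (Finset.range K)) ∪ {G (z K)}) := by
    intro i hi
    by_cases hq : ∃ j < K, q (z j) = i
    · obtain ⟨j, hj, hji⟩ := hq
      simp only [Finset.coe_union, Set.mem_union, Finset.coe_image, Set.mem_image]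
      exact Or.inl ⟨j, by simpa using ⟨hj, hji⟩⟩
    · push_neg at hq
      have := transcript_eq_zero A K q i hq K le_rfl
      have hGi : G (z K) = i := by
        have hb : banditSucceeds A K q G i := hi
        rw [banditSucceeds, this] at hb
        exact hb
      simp [hGi.symm]
  calc {i : Fin A | banditSucceeds A K q G i}.ncard
      ≤ ((Finset.image (fun j => q (z j)) (Finset.range K)) ∪ {G (z K)} : Finset (Fin A)).card := by
        rw [← Set.ncard_coe_finset]
        exact Set.ncard_le_ncard hsub ((Finset.image (fun j => q (z j)) (Finset.range K)) ∪ {G (z K)}).finite_toSet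
    _ ≤ (Finset.image (fun j => q (z j)) (Finset.range K)).card + 1 := by
        exact (Finset.card_union_le _ _).trans (by simp)
    _ ≤ K + 1 := by
        have := Finset.card_image_le (f := fun j => q (z j)) (s := Finset.range K)
        simpa using Nat.add_le_add_right this 1
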